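/- arXiv:1804.07281 — 8 statements merged into one kernel-verified Lean document; each statement's English description precedes it below -/
import Mathlib

section
/- Let E be a real Hilbert space with x ⪯ y defined by ⟨x,x⟩ ≤ ⟨x,y⟩. Then every nonempty subset P of E has a meet: there exists z with z ⪯ p for all p ∈ P, and for every y with y ⪯ p for all p ∈ P, one has y ⪯ z. In particular, if some nonzero x satisfies x ⪯ p for all p ∈ P, the meet is the unique point of smallest norm in the closed convex hull of P. -/
/-- In the inner-product sponge on a real Hilbert space, every nonempty subset
has a meet; and if some nonzero `x` is a left bound, the meet is the unique point of
smallest norm in the closed convex hull. -/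
theorem stmt_4 {E : Type*} [NormedAddCommGroup E] [InnerProductSpace ℝ E] [CompleteSpace E]
    (P : Set E) (hP : P.Nonempty) :
    ∃ z : E, ((∀ p ∈ P, (inner ℝ z z : ℝ) ≤ inner ℝ z p) ∧
        ∀ y : E, (∀ p ∈ P, (inner ℝ y y : ℝ) ≤ inner ℝ y p) → (inner ℝ y y : ℝ) ≤ inner ℝ y z) ∧
      ((∃ x : E, x ≠ 0 ∧ ∀ p ∈ P, (inner ℝ x x : ℝ) ≤ inner ℝ x p) →
        z ∈ closure (convexHull ℝ P) ∧
        (∀ w ∈ closure (convexHull ℝ P), ‖z‖ ≤ ‖w‖) ∧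
        (∀ w ∈ closure (convexHull ℝ P), ‖w‖ ≤ ‖z‖ → w = z)) := by
  set K : Set E := closure (convexHull ℝ P) with hK
  have hKne : K.Nonempty := hP.mono ((subset_convexHull ℝ P).trans subset_closure)
  have hKconv : Convex ℝ K := (convex_convexHull ℝ P).closure
  have hKcomp : IsComplete K := isClosed_closure.isComplete
  obtain ⟨z, hzK, hzmin⟩ := exists_norm_eq_iInf_of_complete_convex hKne hKcomp hKconv 0
  have hvar : ∀ w ∈ K, (inner ℝ (0 - z) (w - z) : ℝ) ≤ 0 :=
    (norm_eq_iInf_iff_real_inner_le_zero hKconv hzK).mp hzmin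
  -- variational inequality: ⟨z, z⟩ ≤ ⟨z, w⟩ for all w ∈ K
  have hvar' : ∀ w ∈ K, (inner ℝ z z : ℝ) ≤ inner ℝ z w := by
    intro w hw
    have := hvar w hw
    rw [zero_sub, inner_neg_left, inner_sub_right] at this
    linarith
  -- half-space containment
  have hhalf : ∀ y : E, (∀ p ∈ P, (inner ℝ y y : ℝ) ≤ inner ℝ y p) →
      ∀ w ∈ K, (inner ℝ y y : ℝ) ≤ inner ℝ y w := by
    intro y hy w hw
    have hsub : K ⊆ {w : E | (inner ℝ y y : ℝ) ≤ inner ℝ y w} := by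
      rw [hK]
      apply closure_minimal
      · apply convexHull_min hy
        exact convex_halfSpace_ge (innerSL ℝ y).toLinearMap.isLinear _
      · exact isClosed_le continuous_const (innerSL ℝ y).continuous
    exact hsub hw
  refine ⟨z, ⟨fun p hp => hvar' p ((subset_convexHull ℝ P).trans subset_closure hp),
    fun y hy => hhalf y hy z hzK⟩, fun _ => ⟨hzK, ?_, ?_⟩⟩
  · intro w hw
    have h1 : (inner ℝ z z : ℝ) ≤ inner ℝ z w := hvar' w hw
    have h2 : (inner ℝ z w : ℝ) ≤ ‖z‖ * ‖w‖ := real_inner_le_norm z w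
    have h3 : ‖z‖ ^ 2 ≤ ‖z‖ * ‖w‖ := by
      rw [sq]
      calc ‖z‖ * ‖z‖ = inner ℝ z z := (real_inner_self_eq_norm_mul_norm z).symm
        _ ≤ inner ℝ z w := h1
        _ ≤ ‖z‖ * ‖w‖ := h2
    rcases eq_or_ne z 0 with h | h
    · simp [h]
    · have hz : 0 < ‖z‖ := norm_pos_iff.mpr h
      nlinarith
  · intro w hw hnorm
    have h1 : (inner ℝ z z : ℝ) ≤ inner ℝ z w := hvar' w hw
    have hsq : ‖w - z‖ ^ 2 = ‖w‖ ^ 2 - 2 * inner ℝ z w + ‖z‖ ^ 2 := by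
      rw [← real_inner_self_eq_norm_sq, ← real_inner_self_eq_norm_sq,
        ← real_inner_self_eq_norm_sq, inner_sub_sub_self]
      rw [real_inner_comm w z]; ring
    have hzz : (inner ℝ z z : ℝ) = ‖z‖ ^ 2 := real_inner_self_eq_norm_sq z
    have hle : ‖w - z‖ ^ 2 ≤ 0 := by nlinarith [norm_nonneg w, norm_nonneg z]
    have : ‖w - z‖ = 0 := by nlinarith [norm_nonneg (w - z)]
    have := norm_eq_zero.mp this
    exact sub_eq_zero.mp this
end

section
/- Let S be a complete metric space, ⪯ an orientation on S that is topologically closed (as a subset of S × S), such that every left-bounded pair in S has a meet, and let h : S → ℝ be continuous and a discriminator. Then every nonempty right-bounded subset of S has a join. -/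
/-- In a complete metric space with a topologically closed orientation in which
every left-bounded pair has a meet, and admitting a continuous discriminator `h`, every
nonempty right-bounded subset has a join. -/
theorem stmt_5 {S : Type*} [MetricSpace S] [CompleteSpace S] (r : S → S → Prop)
    (hrefl : ∀ x, r x x)
    (hanti : ∀ x y, r x y → r y x → x = y)
    (hclosed : IsClosed {p : S × S | r p.1 p.2})
    (hmeet : ∀ x y : S, (∃ z, r z x ∧ r z y) →
      ∃ m, (r m x ∧ r m y) ∧ ∀ z, r z x → r z y → r z m)
    (h : S → ℝ) (hcont : Continuous h)
    (hdisc : ∀ ε > (0 : ℝ), ∃ δ > (0 : ℝ), ∀ x y : S, r x y → h y < h x + δ → dist x y < ε) :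
    ∀ P : Set S, P.Nonempty → (∃ s, ∀ p ∈ P, r p s) →
      ∃ j, (∀ p ∈ P, r p j) ∧ ∀ y, (∀ p ∈ P, r p y) → r j y := by
  rintro P ⟨p0, hp0⟩ ⟨s0, hs0⟩
  have key : ∀ x y : S, r x y → h y ≤ h x → x = y := by
    intro x y hxy hle
    by_contra hne
    have hd : 0 < dist x y := dist_pos.mpr hne
    obtain ⟨δ, hδ, H⟩ := hdisc (dist x y) hd
    exact absurd (H x y hxy (lt_of_le_of_lt hle (by linarith))) (lt_irrefl _)
  have mono : ∀ x y : S, r x y → h x ≤ h y := by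
    intro x y hxy
    by_contra hlt
    push_neg at hlt
    have := key x y hxy hlt.le
    subst this; exact lt_irrefl _ hlt
  set U : Set S := {u | ∀ p ∈ P, r p u} with hU
  have hs0U : s0 ∈ U := hs0
  have meetU : ∀ u ∈ U, ∀ v ∈ U, ∃ w, w ∈ U ∧ r w u ∧ r w v := by
    intro u hu v hv
    obtain ⟨m, ⟨hmu, hmv⟩, hmax⟩ := hmeet u v ⟨p0, hu p0 hp0, hv p0 hp0⟩
    exact ⟨m, fun p hp => hmax p (hu p hp) (hv p hp), hmu, hmv⟩
  have hne : (h '' U).Nonempty := ⟨h s0, s0, hs0U, rfl⟩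
  have hbdd : BddBelow (h '' U) := ⟨h p0, by rintro _ ⟨u, hu, rfl⟩; exact mono _ _ (hu p0 hp0)⟩
  set c := sInf (h '' U) with hc
  have hcle : ∀ u ∈ U, c ≤ h u := fun u hu => csInf_le hbdd ⟨u, hu, rfl⟩
  have hseq : ∀ n : ℕ, ∃ u, u ∈ U ∧ h u < c + 1/(n+1) := by
    intro n
    have hpos : (0:ℝ) < 1/(n+1) := by positivity
    obtain ⟨a, ⟨u, hu, rfl⟩, ha⟩ := Real.lt_sInf_add_pos hne hpos
    exact ⟨u, hu, ha⟩
  choose u huU hub using hseq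
  have hcauchy : CauchySeq u := by
    rw [Metric.cauchySeq_iff]
    intro ε hε
    obtain ⟨δ, hδ, H⟩ := hdisc (ε/2) (by linarith)
    obtain ⟨N, hN⟩ := exists_nat_gt (1/δ)
    refine ⟨N, fun m hm n hn => ?_⟩
    have hbnd : ∀ k ≥ N, ∀ w, w ∈ U → r w (u k) → dist w (u k) < ε/2 := by
      intro k hk w hw hwk
      apply H _ _ hwk
      have hk1 : (1:ℝ)/δ < (k:ℝ)+1 := by
        refine lt_of_lt_of_le hN ?_
        have : (N:ℝ) ≤ (k:ℝ) := by exact_mod_cast hk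
        linarith
      have h1 : (1:ℝ)/((k:ℝ)+1) < δ := by
        rw [div_lt_iff₀ (by positivity)]
        have h2 : 1/δ * δ < ((k:ℝ)+1) * δ := by
          apply mul_lt_mul_of_pos_right hk1 hδ
        rw [one_div_mul_cancel (ne_of_gt hδ)] at h2
        linarith
      have := hub k
      have hcw := hcle w hw
      linarith
    obtain ⟨w, hwU, hwm, hwn⟩ := meetU (u m) (huU m) (u n) (huU n)
    have d1 := hbnd m hm w hwU hwm
    have d2 := hbnd n hn w hwU hwn
    calc dist (u m) (u n) ≤ dist (u m) w + dist w (u n) := dist_triangle _ _ _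
      _ < ε/2 + ε/2 := by rw [dist_comm (u m) w]; linarith
      _ = ε := by ring
  obtain ⟨j, hj⟩ := cauchySeq_tendsto_of_complete hcauchy
  have hjU : j ∈ U := by
    intro p hp
    have hcl : IsClosed {y : S | r p y} := hclosed.preimage (Continuous.prodMk_right p)
    exact hcl.mem_of_tendsto hj (Filter.Eventually.of_forall fun n => huU n p hp)
  have hjc : h j = c := by
    refine le_antisymm ?_ (hcle j hjU)
    have t1 : Filter.Tendsto (fun n => h (u n)) Filter.atTop (nhds (h j)) :=
      (hcont.tendsto j).comp hj
    have t2 : Filter.Tendsto (fun n : ℕ => c + 1/((n:ℝ)+1)) Filter.atTop (nhds c) := by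
      have := tendsto_one_div_add_atTop_nhds_zero_nat (𝕜 := ℝ)
      have := Filter.Tendsto.const_add c this
      simpa using this
    exact le_of_tendsto_of_tendsto' t1 t2 fun n => (hub n).le
  refine ⟨j, hjU, ?_⟩
  intro y hy
  obtain ⟨w, hwU, hwj, hwy⟩ := meetU j hjU y hy
  have : w = j := key w j hwj (by rw [hjc]; exact hcle w hwU)
  subst this
  exact hwy
end

section
/- Let ⪯ be an orientation on ℝ that is topologically closed, implies ≤ (x ⪯ y → x ≤ y), and such that every left-bounded pair has a meet. Then every nonempty right-bounded subset of ℝ (with respect to ⪯) has a join. -/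
/-- A topologically closed orientation on ℝ which implies ≤ and has meets of
left-bounded pairs has joins of all nonempty right-bounded subsets. -/
theorem stmt_7 (r : ℝ → ℝ → Prop)
    (hrefl : ∀ x, r x x)
    (hanti : ∀ x y, r x y → r y x → x = y)
    (hclosed : IsClosed {p : ℝ × ℝ | r p.1 p.2})
    (hle : ∀ x y, r x y → x ≤ y)
    (hmeet : ∀ x y : ℝ, (∃ z, r z x ∧ r z y) →
      ∃ m, (r m x ∧ r m y) ∧ ∀ z, r z x → r z y → r z m) :
    ∀ P : Set ℝ, P.Nonempty → (∃ s, ∀ p ∈ P, r p s) →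
      ∃ j, (∀ p ∈ P, r p j) ∧ ∀ y, (∀ p ∈ P, r p y) → r j y := by
  intro P ⟨p₀, hp₀⟩ ⟨s, hs⟩
  set U : Set ℝ := {y | ∀ p ∈ P, r p y} with hU
  have hUne : U.Nonempty := ⟨s, hs⟩
  have hUbd : BddBelow U := ⟨p₀, fun y hy => hle _ _ (hy p₀ hp₀)⟩
  have hUclosed : IsClosed U := by
    have : U = ⋂ p ∈ P, {y | r p y} := by
      ext y; simp [hU, Set.mem_iInter]
    rw [this]
    exact isClosed_biInter fun p _ =>
      (hclosed.preimage (Continuous.prodMk_right p) : IsClosed {y | r p y})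
  have hjU : sInf U ∈ U := hUclosed.csInf_mem hUne hUbd
  refine ⟨sInf U, fun p hp => hjU p hp, fun y hy => ?_⟩
  obtain ⟨m, ⟨hmj, hmy⟩, hmax⟩ := hmeet (sInf U) y ⟨p₀, hjU p₀ hp₀, hy p₀ hp₀⟩
  have hmU : m ∈ U := fun p hp => hmax p (hjU p hp) (hy p hp)
  have : m = sInf U := le_antisymm (hle _ _ hmj) (csInf_le hUbd hmU)
  rwa [this] at hmy
end

section
/- Let (G, ⪯) be an oriented group and H a subgroup of G with positive cone C = {x : 1 ⪯ x}. Define a relation ⊑ on the left coset space G/H by x̄ ⊑ ȳ iff x⁻¹·y ∈ C·H. Then ⊑ is reflexive and antisymmetric (an orientation on G/H) if and only if for all q, r ∈ G: 1 ⪯ q, 1 ⪯ r, and q·r ∈ H imply q ∈ H and r ∈ H. -/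
open scoped Pointwise

/-- For an oriented group `(G, ⪯)` with positive cone `C` and a subgroup `H`,
the relation `x̄ ⊑ ȳ ↔ x⁻¹·y ∈ C·H` on the left coset space `G/H` is reflexive and
antisymmetric iff `1 ⪯ q`, `1 ⪯ r`, `q·r ∈ H` imply `q ∈ H` and `r ∈ H`. -/
theorem stmt_11 {G : Type*} [Group G] (le : G → G → Prop)
    (hrefl : ∀ x, le x x)
    (hanti : ∀ x y, le x y → le y x → x = y)
    (hinv : ∀ x y z : G, le x y → le (x * z) (y * z) ∧ le (z * x) (z * y))
    (H : Subgroup G) (C : Set G) (hC : C = {x : G | le 1 x}) :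
    ((∀ x : G, x⁻¹ * x ∈ C * (H : Set G)) ∧
      (∀ x y : G, x⁻¹ * y ∈ C * (H : Set G) → y⁻¹ * x ∈ C * (H : Set G) →
        (QuotientGroup.mk x : G ⧸ H) = QuotientGroup.mk y)) ↔
    (∀ q r : G, le 1 q → le 1 r → q * r ∈ H → q ∈ H ∧ r ∈ H) := by
  subst hC
  constructor
  · rintro ⟨-, hA⟩ q r hq hr hqr
    have h1 : (1 : G)⁻¹ * q ∈ {x : G | le 1 x} * (H : Set G) := by
      refine ⟨q, hq, 1, H.one_mem, by group⟩
    have h2 : q⁻¹ * 1 ∈ {x : G | le 1 x} * (H : Set G) := by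
      refine ⟨r, hr, (q * r)⁻¹, H.inv_mem hqr, by group⟩
    have := hA 1 q h1 h2
    have hqH : q ∈ H := by
      have := (QuotientGroup.eq (s := H)).mp this
      simpa using this
    exact ⟨hqH, by simpa using H.mul_mem (H.inv_mem hqH) hqr⟩
  · intro hcond
    constructor
    · intro x
      exact ⟨1, hrefl 1, 1, H.one_mem, by group⟩
    · rintro x y ⟨c₁, hc₁, h₁, hh₁, he₁⟩ ⟨c₂, hc₂, h₂, hh₂, he₂⟩
      rw [QuotientGroup.eq]
      -- x⁻¹y = c₁h₁, y⁻¹x = c₂h₂ so c₁ * (h₁ c₂ h₁⁻¹) = (h₂⁻¹ h₁⁻¹)⁻¹... product in H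
      have hr : le 1 (h₁ * c₂ * h₁⁻¹) := by
        have := (hinv 1 c₂ h₁ hc₂).2
        have := (hinv (h₁ * 1) (h₁ * c₂) h₁⁻¹ this).1
        simpa using this
      simp only at he₁ he₂
      have hmem : c₁ * (h₁ * c₂ * h₁⁻¹) ∈ H := by
        have heq : c₁ * (h₁ * c₂ * h₁⁻¹) = (c₁ * h₁) * (c₂ * h₂) * (h₂⁻¹ * h₁⁻¹) := by
          group
        rw [heq, he₁, he₂]
        have : (x⁻¹ * y) * (y⁻¹ * x) * (h₂⁻¹ * h₁⁻¹) = h₂⁻¹ * h₁⁻¹ := by group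
        rw [this]
        exact H.mul_mem (H.inv_mem hh₂) (H.inv_mem hh₁)
      have := hcond c₁ (h₁ * c₂ * h₁⁻¹) hc₁ hr hmem
      rw [← he₁]
      exact H.mul_mem this.1 hh₁
end

section
/- Let E be a real Hilbert space of dimension ≥ 2, h a unit vector in E, and f : ℝ≥0 → ℝ≥0. Define C_f = {x ∈ E : f(‖x − ⟨x,h⟩h‖) ≤ ⟨x,h⟩} and x ⪯_f y iff y − x ∈ C_f. Then ⪯_f is reflexive and antisymmetric (so (E, ⪯_f, +) is an oriented abelian group) if and only if f(0) = 0 and f(d) > 0 for all d > 0. -/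
open scoped NNReal

/-- Auxiliary: in a real Hilbert space of dimension ≥ 2, there is a unit vector
orthogonal to a given vector. -/
lemma exists_unit_orthogonal {E : Type*} [NormedAddCommGroup E] [InnerProductSpace ℝ E]
    [CompleteSpace E] (hdim : 2 ≤ Module.rank ℝ E) (h : E) :
    ∃ e : E, (inner ℝ e h : ℝ) = 0 ∧ ‖e‖ = 1 := by
  have hne : (ℝ ∙ h)ᗮ ≠ ⊥ := by
    intro hbot
    have htop : (ℝ ∙ h) = ⊤ := Submodule.orthogonal_eq_bot_iff.mp hbot
    have hrank : Module.rank ℝ (ℝ ∙ h) ≤ 1 := by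
      simpa using rank_span_le (R := ℝ) ({h} : Set E)
    have h1 : Module.rank ℝ E ≤ 1 := by
      rw [← rank_top ℝ E, ← htop]
      exact hrank
    exact absurd (hdim.trans h1) (by norm_num)
  obtain ⟨v, hv, hv0⟩ := Submodule.exists_mem_ne_zero_of_ne_bot hne
  refine ⟨‖v‖⁻¹ • v, ?_, ?_⟩
  · have : (inner ℝ v h : ℝ) = 0 := by
      have := (Submodule.mem_orthogonal _ v).mp hv h (Submodule.mem_span_singleton_self h)
      rwa [real_inner_comm] at this
    rw [real_inner_smul_left, this, mul_zero]
  · rw [norm_smul, norm_inv, norm_norm, inv_mul_cancel₀ (norm_ne_zero_iff.mpr hv0)]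

/-- The epigraph relation `x ⪯_f y ↔ y - x ∈ C_f` on a real Hilbert space of
dimension ≥ 2 is reflexive and antisymmetric iff `f 0 = 0` and `f d > 0` for `d > 0`. -/
theorem stmt_13 {E : Type*} [NormedAddCommGroup E] [InnerProductSpace ℝ E] [CompleteSpace E]
    (hdim : 2 ≤ Module.rank ℝ E)
    (h : E) (hh : ‖h‖ = 1) (f : ℝ≥0 → ℝ≥0)
    (le_f : E → E → Prop)
    (hle_f : ∀ x y : E, le_f x y ↔
      (f ‖(y - x) - (inner ℝ (y - x) h : ℝ) • h‖₊ : ℝ) ≤ (inner ℝ (y - x) h : ℝ)) :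
    ((∀ x : E, le_f x x) ∧ (∀ x y : E, le_f x y → le_f y x → x = y)) ↔
      (f 0 = 0 ∧ ∀ d : ℝ≥0, 0 < d → 0 < f d) := by
  constructor
  · rintro ⟨hrefl, hanti⟩
    have h0 : f 0 = 0 := by
      have := (hle_f 0 0).mp (hrefl 0)
      simp only [sub_zero, inner_zero_left, zero_smul, nnnorm_zero] at this
      exact_mod_cast le_antisymm this (f 0).coe_nonneg
    refine ⟨h0, ?_⟩
    intro d hd
    rcases eq_or_lt_of_le (zero_le : 0 ≤ f d) with hfd | hfd
    swap
    · exact hfd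
    exfalso
    obtain ⟨e, he0, he1⟩ := exists_unit_orthogonal hdim h
    set w : E := (d : ℝ) • e with hw
    have hwh : (inner ℝ w h : ℝ) = 0 := by
      rw [hw, real_inner_smul_left, he0, mul_zero]
    have hwn : ‖w‖₊ = d := by
      ext
      simp [hw, norm_smul, he1]
    have h1 : le_f 0 w := by
      rw [hle_f]
      simp [hwh, hwn, ← hfd]
    have h2 : le_f w 0 := by
      rw [hle_f]
      simp only [zero_sub, inner_neg_left, hwh, neg_zero, zero_smul, sub_zero, nnnorm_neg, hwn,
        ← hfd]
      simp
    have := hanti 0 w h1 h2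
    apply hd.ne'
    have : w = 0 := this.symm
    have := congrArg (‖·‖₊) this
    simpa [hwn] using this
  · rintro ⟨h0, hpos⟩
    constructor
    · intro x
      rw [hle_f]
      simp [h0]
    · intro x y hxy hyx
      rw [hle_f] at hxy hyx
      have hswap : (inner ℝ (x - y) h : ℝ) = - (inner ℝ (y - x) h : ℝ) := by
        rw [← inner_neg_left, neg_sub]
      have hge1 : (0 : ℝ) ≤ inner ℝ (y - x) h := le_trans (f _).coe_nonneg hxy
      have hge2 : (0 : ℝ) ≤ inner ℝ (x - y) h := le_trans (f _).coe_nonneg hyx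
      have hinz : (inner ℝ (y - x) h : ℝ) = 0 := by
        rw [hswap] at hge2; linarith
      rw [hinz] at hxy
      simp only [zero_smul, sub_zero] at hxy
      have : f ‖y - x‖₊ = 0 := by
        exact_mod_cast le_antisymm hxy (f _).coe_nonneg
      have hn : ‖y - x‖₊ = 0 := by
        by_contra hne
        exact absurd this (hpos _ (pos_iff_ne_zero.mpr hne)).ne'
      have : y - x = 0 := by simpa using hn
      exact (sub_eq_zero.mp this).symm
end

section
/- Let E be a real Hilbert space of dimension ≥ 2, h a unit vector, and f : ℝ≥0 → ℝ≥0 with f(0)=0 and f(d)>0 for d>0. Then the relation x ⪯_f y ≡ f(‖y_⊥ − x_⊥‖) ≤ y_h − x_h is topologically closed in E × E if and only if f is lower semicontinuous. -/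
open scoped NNReal
open Filter Topology

/-- The epigraph relation `⪯_f` is topologically closed in `E × E` iff `f` is
lower semicontinuous. -/
theorem stmt_14 {E : Type*} [NormedAddCommGroup E] [InnerProductSpace ℝ E] [CompleteSpace E]
    (hdim : 2 ≤ Module.rank ℝ E)
    (h : E) (hh : ‖h‖ = 1) (f : ℝ≥0 → ℝ≥0)
    (hf0 : f 0 = 0) (hfpos : ∀ d : ℝ≥0, 0 < d → 0 < f d)
    (le_f : E → E → Prop)
    (hle_f : ∀ x y : E, le_f x y ↔
      (f ‖(y - x) - (inner ℝ (y - x) h : ℝ) • h‖₊ : ℝ) ≤ (inner ℝ (y - x) h : ℝ)) :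
    IsClosed {p : E × E | le_f p.1 p.2} ↔ LowerSemicontinuous f := by
  classical
  set C : Set E := {w : E | (f ‖w - (inner ℝ w h : ℝ) • h‖₊ : ℝ) ≤ (inner ℝ w h : ℝ)} with hCdef
  have hset : {p : E × E | le_f p.1 p.2} = (fun p : E × E => p.2 - p.1) ⁻¹' C := by
    ext p; simp [hCdef, hle_f, Set.mem_preimage]
  have hCiff : IsClosed {p : E × E | le_f p.1 p.2} ↔ IsClosed C := by
    constructor
    · intro hS
      have hC0 : C = (fun w : E => ((0 : E), w)) ⁻¹' {p : E × E | le_f p.1 p.2} := by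
        ext w
        simp [hset, Set.mem_preimage]
      rw [hC0]
      exact hS.preimage (by continuity)
    · intro hC'
      rw [hset]
      exact hC'.preimage (by continuity)
  rw [hCiff]
  -- unit vector orthogonal to h
  have hne : h ≠ 0 := by
    intro h0; rw [h0, norm_zero] at hh; norm_num at hh
  obtain ⟨u, hu1, huh⟩ : ∃ u : E, ‖u‖ = 1 ∧ (inner ℝ u h : ℝ) = 0 := by
    set K : Submodule ℝ E := ℝ ∙ h with hK
    have hfin : FiniteDimensional ℝ K := by
      rw [hK]; infer_instance
    have hKtop : K ≠ ⊤ := by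
      intro htop
      have h1 : Module.rank ℝ E = Module.rank ℝ K := by
        rw [htop, rank_top]
      have h2 : Module.rank ℝ K ≤ 1 := by
        have := rank_span_le (R := ℝ) (M := E) ({h} : Set E)
        simpa [hK] using this
      have : (2 : Cardinal) ≤ 1 := hdim.trans (h1.le.trans h2)
      norm_num at this
    have horth : Kᗮ ≠ ⊥ := by
      intro hbot
      apply hKtop
      have := Submodule.orthogonal_orthogonal K
      rw [hbot] at this
      rw [← this, Submodule.bot_orthogonal_eq_top]
    obtain ⟨v, hvK, hv0⟩ := Submodule.exists_mem_ne_zero_of_ne_bot horth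
    refine ⟨‖v‖⁻¹ • v, ?_, ?_⟩
    · rw [norm_smul, norm_inv, norm_norm, inv_mul_cancel₀ (norm_ne_zero_iff.mpr hv0)]
    · have hvh : (inner ℝ v h : ℝ) = 0 := by
        have := (Submodule.mem_orthogonal K v).mp hvK h (Submodule.mem_span_singleton_self h)
        rwa [real_inner_comm] at this
      rw [real_inner_smul_left, hvh, mul_zero]
  constructor
  · -- closed → lsc
    intro hCc d a ha
    by_contra hcon
    set φ : ℝ≥0 → E := fun e => (e : ℝ) • u + (a : ℝ) • h with hφ
    have hφcont : Continuous φ := by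
      apply Continuous.add
      · exact (NNReal.continuous_coe.smul continuous_const)
      · exact continuous_const
    have hinner : ∀ e : ℝ≥0, (inner ℝ (φ e) h : ℝ) = a := by
      intro e
      simp [hφ, inner_add_left, real_inner_smul_left, huh,
        real_inner_self_eq_norm_sq, hh]
    have hφmem : ∀ e : ℝ≥0, f e ≤ a → φ e ∈ C := by
      intro e he
      have hperp : φ e - (inner ℝ (φ e) h : ℝ) • h = (e : ℝ) • u := by
        rw [hinner]; simp [hφ]
      have hn : ‖(e : ℝ) • u‖₊ = e := by
        have hu : ‖u‖₊ = 1 := by ext; simpa using hu1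
        rw [nnnorm_smul, hu, mul_one, NNReal.nnnorm_eq]
      show (f ‖φ e - (inner ℝ (φ e) h : ℝ) • h‖₊ : ℝ) ≤ (inner ℝ (φ e) h : ℝ)
      rw [hperp, hn, hinner]
      exact_mod_cast he
    have hd : d ∈ closure {e : ℝ≥0 | f e ≤ a} := by
      rw [mem_closure_iff_frequently]
      exact (not_eventually.mp hcon).mono (fun e he => not_lt.mp he)
    have hmem : φ d ∈ C := by
      have h1 : φ d ∈ closure (φ '' {e : ℝ≥0 | f e ≤ a}) :=
        image_closure_subset_closure_image hφcont ⟨d, hd, rfl⟩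
      have h2 : closure (φ '' {e : ℝ≥0 | f e ≤ a}) ⊆ C :=
        closure_minimal (fun w ⟨e, he, hw⟩ => hw ▸ hφmem e he) hCc
      exact h2 h1
    have hperp : φ d - (inner ℝ (φ d) h : ℝ) • h = (d : ℝ) • u := by
      rw [hinner]; simp [hφ]
    have hn : ‖(d : ℝ) • u‖₊ = d := by
      have hu : ‖u‖₊ = 1 := by ext; simpa using hu1
      rw [nnnorm_smul, hu, mul_one, NNReal.nnnorm_eq]
    have hmem' : (f ‖φ d - (inner ℝ (φ d) h : ℝ) • h‖₊ : ℝ) ≤ (inner ℝ (φ d) h : ℝ) := hmem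
    rw [hperp, hn, hinner] at hmem'
    have : f d ≤ a := by exact_mod_cast hmem'
    exact absurd ha (not_lt.mpr this)
  · -- lsc → closed
    intro hf
    have hg : LowerSemicontinuous (fun w : E => (f ‖w - (inner ℝ w h : ℝ) • h‖₊ : ℝ)) := by
      have hcont : Continuous (fun w : E => ‖w - (inner ℝ w h : ℝ) • h‖₊) := by
        apply Continuous.nnnorm
        exact continuous_id.sub ((continuous_id.inner continuous_const).smul continuous_const)
      have hlsc : LowerSemicontinuous (fun w : E => f ‖w - (inner ℝ w h : ℝ) • h‖₊) :=
        hf.comp hcont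
      exact NNReal.continuous_coe.comp_lowerSemicontinuous hlsc
        (fun x y hxy => NNReal.coe_le_coe.mpr hxy)
    have hc : Continuous (fun w : E => (inner ℝ w h : ℝ)) :=
      continuous_id.inner continuous_const
    rw [← isOpen_compl_iff]
    rw [isOpen_iff_mem_nhds]
    intro w hw
    simp only [Set.mem_compl_iff, hCdef, Set.mem_setOf_eq, not_le] at hw
    obtain ⟨b, hb1, hb2⟩ := exists_between hw
    have h1 : ∀ᶠ w' in 𝓝 w, b < (f ‖w' - (inner ℝ w' h : ℝ) • h‖₊ : ℝ) := hg w b hb2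
    have h2 : ∀ᶠ w' in 𝓝 w, (inner ℝ w' h : ℝ) < b :=
      (isOpen_Iio.preimage hc).eventually_mem hb1
    filter_upwards [h1, h2] with w' hw1 hw2
    simp only [Set.mem_compl_iff, hCdef, Set.mem_setOf_eq, not_le]
    exact hw2.trans hw1
end

section
/- Let V be a real inner product space, f : ℝ≥0 → ℝ≥0 square-superadditive, lower semicontinuous, and increasing, and let p, q ∈ V with ⟨p,q⟩ ≥ 0 and q ≠ 0. Then f⁺(‖p‖) + f(‖q‖) ≤ f(‖p+q‖), where f⁺(x) = lim_{e↓x} f(e). -/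
open scoped NNReal

/-- For `f : ℝ≥0 → ℝ≥0` square-superadditive, lower semicontinuous and
increasing, and `p, q` in a real inner product space with `⟨p,q⟩ ≥ 0` and `q ≠ 0`,
`f⁺(‖p‖) + f(‖q‖) ≤ f(‖p+q‖)`, where `f⁺(x) = inf {f e : e > x}`. -/
theorem stmt_17 {V : Type*} [NormedAddCommGroup V] [InnerProductSpace ℝ V]
    (f : ℝ≥0 → ℝ≥0)
    (hsq : ∀ x y : ℝ≥0, f x + f y ≤ f (NNReal.sqrt (x ^ 2 + y ^ 2)))
    (hlsc : LowerSemicontinuous f)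
    (hmono : StrictMono f)
    (p q : V) (hpq : (0 : ℝ) ≤ inner ℝ p q) (hq : q ≠ 0) :
    sInf (f '' Set.Ioi ‖p‖₊) + f ‖q‖₊ ≤ f ‖p + q‖₊ := by
  set a := ‖p‖₊ with ha
  set b := ‖q‖₊ with hb0
  set c := ‖p + q‖₊ with hc
  have hb : 0 < b := by simpa [hb0] using hq
  have hnorm : a ^ 2 + b ^ 2 ≤ c ^ 2 := by
    rw [← NNReal.coe_le_coe]
    push_cast [ha, hb0, hc, coe_nnnorm]
    have hexp : ‖p + q‖ ^ 2 = ‖p‖ ^ 2 + 2 * inner ℝ p q + ‖q‖ ^ 2 :=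
      norm_add_sq_real p q
    nlinarith
  set S := sInf (f '' Set.Ioi a) with hS
  have key : ∀ y : ℝ≥0, y < b → S + f y ≤ f c := by
    intro y hy
    have hy2 : y ^ 2 < b ^ 2 := pow_lt_pow_left₀ hy zero_le (by norm_num)
    have hyc : y ^ 2 ≤ c ^ 2 :=
      le_trans (le_trans hy2.le (le_add_self)) hnorm
    set x := NNReal.sqrt (c ^ 2 - y ^ 2) with hx
    have hx2 : x ^ 2 = c ^ 2 - y ^ 2 := NNReal.sq_sqrt _
    have hxy : x ^ 2 + y ^ 2 = c ^ 2 := by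
      rw [hx2]; exact tsub_add_cancel_of_le hyc
    have hax : a < x := by
      have h1 : a ^ 2 < c ^ 2 - y ^ 2 := by
        rw [lt_tsub_iff_right]
        calc a ^ 2 + y ^ 2 < a ^ 2 + b ^ 2 := by exact add_lt_add_right hy2 _
          _ ≤ c ^ 2 := hnorm
      have := NNReal.sqrt_lt_sqrt.mpr h1
      rwa [NNReal.sqrt_sq] at this
    have hSx : S ≤ f x :=
      csInf_le (OrderBot.bddBelow _) ⟨x, hax, rfl⟩
    calc S + f y ≤ f x + f y := add_le_add_left hSx _
      _ ≤ f (NNReal.sqrt (x ^ 2 + y ^ 2)) := hsq x y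
      _ = f c := by rw [hxy, NNReal.sqrt_sq]
  by_contra h
  push_neg at h
  set t := f c - S with ht0
  have hfb : 0 < f b := lt_of_le_of_lt zero_le (hmono hb)
  have ht : t < f b := by
    rcases le_or_gt (f c) S with hle | hlt
    · simpa [ht0, tsub_eq_zero_of_le hle] using hfb
    · rw [ht0, tsub_lt_iff_left hlt.le]
      exact h
  have hev : ∀ᶠ y in nhds b, t < f y := hlsc b t ht
  haveI hne : (nhdsWithin b (Set.Iio b)).NeBot :=
    nhdsWithin_Iio_self_neBot' ⟨0, hb⟩
  have hev1 : ∀ᶠ y in nhdsWithin b (Set.Iio b), t < f y :=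
    Filter.Eventually.filter_mono nhdsWithin_le_nhds hev
  have hev' : ∀ᶠ y in nhdsWithin b (Set.Iio b), t < f y ∧ y < b :=
    hev1.and (eventually_mem_nhdsWithin.mono fun y hy => hy)
  obtain ⟨y, hty, hyb⟩ := hev'.exists
  have h1 : f c ≤ S + t := le_add_tsub
  have h2 : S + t < S + f y := add_lt_add_right hty _
  exact absurd (key y hyb) (not_le.mpr (lt_of_le_of_lt h1 h2))
end

section
/- In the hyperbolic orientation on H⁺ (x ⪯ y iff ‖x − y_⊥‖ ≤ y_h), a pair x, y ∈ H⁺ has a common left bound (some z ∈ H⁺ with z ⪯ x and z ⪯ y) if and only if ‖x_⊥ − y_⊥‖ < x_h + y_h. Moreover, every finite subset of H⁺ has a right bound. -/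
set_option maxHeartbeats 1000000 in
/-- In the hyperbolic orientation on `H⁺`, a pair `x, y` has a common left
bound iff `‖x_⊥ − y_⊥‖ < x_h + y_h`; moreover every finite subset of `H⁺` has a right
bound in `H⁺`. -/
theorem stmt_19 {E : Type*} [NormedAddCommGroup E] [InnerProductSpace ℝ E] [CompleteSpace E]
    (hdim : 2 ≤ Module.rank ℝ E)
    (h : E) (hh : ‖h‖ = 1)
    (le : E → E → Prop)
    (hle : ∀ x y : E, le x y ↔ ‖x - (y - (inner ℝ y h : ℝ) • h)‖ ≤ (inner ℝ y h : ℝ)) :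
    (∀ x y : E, (0 : ℝ) < inner ℝ x h → (0 : ℝ) < inner ℝ y h →
      ((∃ z : E, (0 : ℝ) < inner ℝ z h ∧ le z x ∧ le z y) ↔
        ‖(x - (inner ℝ x h : ℝ) • h) - (y - (inner ℝ y h : ℝ) • h)‖ <
          (inner ℝ x h : ℝ) + (inner ℝ y h : ℝ))) ∧
    (∀ P : Set E, P.Finite → (∀ p ∈ P, (0 : ℝ) < inner ℝ p h) →
      ∃ s : E, (0 : ℝ) < inner ℝ s h ∧ ∀ p ∈ P, le p s) := by
  have hhh : (inner ℝ h h : ℝ) = 1 := by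
    rw [real_inner_self_eq_norm_sq, hh]; norm_num
  have perp : ∀ x : E, (inner ℝ (x - (inner ℝ x h : ℝ) • h) h : ℝ) = 0 := by
    intro x
    rw [inner_sub_left, real_inner_smul_left, hhh]; ring
  have pyth : ∀ (u : E) (c : ℝ), (inner ℝ u h : ℝ) = 0 → ‖u + c • h‖ ^ 2 = ‖u‖ ^ 2 + c ^ 2 := by
    intro u c hu
    rw [norm_add_sq_real, real_inner_smul_right, hu, norm_smul, hh]
    simp [mul_pow, sq_abs]
  constructor
  · intro x y hx hy
    set a : ℝ := inner ℝ x h with ha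
    set b : ℝ := inner ℝ y h with hb
    set xo : E := x - a • h with hxo
    set yo : E := y - b • h with hyo
    have px : (inner ℝ xo h : ℝ) = 0 := by rw [hxo, ha]; exact perp x
    have py : (inner ℝ yo h : ℝ) = 0 := by rw [hyo, hb]; exact perp y
    constructor
    · rintro ⟨z, hz, hzx, hzy⟩
      rw [hle] at hzx hzy
      rw [← ha, ← hxo] at hzx
      rw [← hb, ← hyo] at hzy
      set c : ℝ := inner ℝ z h with hc
      set zo : E := z - c • h with hzo
      have pz : (inner ℝ zo h : ℝ) = 0 := by rw [hzo, hc]; exact perp z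
      have hz1 : z - xo = (zo - xo) + c • h := by rw [hzo]; abel
      have hz2 : z - yo = (zo - yo) + c • h := by rw [hzo]; abel
      have e1 : ‖z - xo‖ ^ 2 = ‖zo - xo‖ ^ 2 + c ^ 2 := by
        rw [hz1]; exact pyth _ _ (by rw [inner_sub_left, pz, px]; ring)
      have e2 : ‖z - yo‖ ^ 2 = ‖zo - yo‖ ^ 2 + c ^ 2 := by
        rw [hz2]; exact pyth _ _ (by rw [inner_sub_left, pz, py]; ring)
      clear_value a b c xo yo zo
      have n1 : ‖zo - xo‖ < a := by
        nlinarith [norm_nonneg (zo - xo), norm_nonneg (z - xo), hzx, hz, hx]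
      have n2 : ‖zo - yo‖ < b := by
        nlinarith [norm_nonneg (zo - yo), norm_nonneg (z - yo), hzy, hz, hy]
      calc ‖xo - yo‖ ≤ ‖xo - zo‖ + ‖zo - yo‖ := norm_sub_le_norm_sub_add_norm_sub xo zo yo
        _ < a + b := by rw [norm_sub_rev]; linarith
    · intro hlt
      clear_value a b xo yo
      set d : ℝ := ‖xo - yo‖ with hd
      have hd0 : 0 ≤ d := norm_nonneg _
      set r : ℝ := min d (max 0 ((d + a - b) / 2)) with hr
      have hr0 : 0 ≤ r := le_min hd0 (le_max_left _ _)
      have hrd : r ≤ d := min_le_left _ _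
      have hra : r < a := lt_of_le_of_lt (min_le_right _ _) (max_lt hx (by linarith))
      have hsb : d - r < b := by
        rcases le_total d (max 0 ((d + a - b) / 2)) with hcs | hcs
        · rw [hr, min_eq_left hcs]; linarith
        · have h2 : (d + a - b) / 2 ≤ r := by
            rw [hr, min_eq_right hcs]; exact le_max_right _ _
          linarith
      clear_value r d
      set w : E := xo + (r / d) • (yo - xo) with hw
      have hw1 : ‖w - xo‖ = r := by
        have e : w - xo = (r / d) • (yo - xo) := by rw [hw]; abel
        rcases eq_or_lt_of_le hd0 with h0 | h0
        · have hxy : xo - yo = 0 := by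
            rw [← norm_eq_zero, ← hd]; exact h0.symm
          have hyx : yo - xo = 0 := by rw [← neg_sub, hxy, neg_zero]
          have hr' : r = 0 := le_antisymm (hrd.trans h0.ge) hr0
          rw [e, hyx, smul_zero, norm_zero, hr']
        · rw [e, norm_smul, Real.norm_eq_abs, abs_of_nonneg (div_nonneg hr0 hd0),
            norm_sub_rev, ← hd, div_mul_cancel₀ _ (ne_of_gt h0)]
      have hw2 : ‖w - yo‖ = d - r := by
        have e : w - yo = (r / d - 1) • (yo - xo) := by
          rw [hw, sub_smul, one_smul]; abel
        rcases eq_or_lt_of_le hd0 with h0 | h0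
        · have hxy : xo - yo = 0 := by
            rw [← norm_eq_zero, ← hd]; exact h0.symm
          have hyx : yo - xo = 0 := by rw [← neg_sub, hxy, neg_zero]
          have hr' : r = 0 := le_antisymm (hrd.trans h0.ge) hr0
          rw [e, hyx, smul_zero, norm_zero, hr', ← h0, sub_zero]
        · have hrd' : r / d ≤ 1 := (div_le_one h0).2 hrd
          rw [e, norm_smul, Real.norm_eq_abs, abs_of_nonpos (by linarith),
            norm_sub_rev, ← hd, neg_sub, sub_mul, one_mul,
            div_mul_cancel₀ _ (ne_of_gt h0)]
      have pw : (inner ℝ w h : ℝ) = 0 := by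
        rw [hw, inner_add_left, px, real_inner_smul_left, inner_sub_left, px, py]; ring
      clear_value w
      set ε : ℝ := min (Real.sqrt (a ^ 2 - r ^ 2)) (Real.sqrt (b ^ 2 - (d - r) ^ 2)) with hε
      have ha2 : 0 < a ^ 2 - r ^ 2 := by nlinarith
      have hb2 : 0 < b ^ 2 - (d - r) ^ 2 := by nlinarith
      have hε0 : 0 < ε := lt_min (Real.sqrt_pos.2 ha2) (Real.sqrt_pos.2 hb2)
      have hε1 : ε ^ 2 ≤ a ^ 2 - r ^ 2 := by
        have h1 := Real.sq_sqrt ha2.le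
        have h2 : ε ≤ Real.sqrt (a ^ 2 - r ^ 2) := min_le_left _ _
        nlinarith [Real.sqrt_nonneg (a ^ 2 - r ^ 2)]
      have hε2 : ε ^ 2 ≤ b ^ 2 - (d - r) ^ 2 := by
        have h1 := Real.sq_sqrt hb2.le
        have h2 : ε ≤ Real.sqrt (b ^ 2 - (d - r) ^ 2) := min_le_right _ _
        nlinarith [Real.sqrt_nonneg (b ^ 2 - (d - r) ^ 2)]
      clear_value ε
      refine ⟨w + ε • h, ?_, ?_, ?_⟩
      · rw [inner_add_left, real_inner_smul_left, pw, hhh]; simpa using hε0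
      · rw [hle, ← ha, ← hxo]
        have e1 : w + ε • h - xo = (w - xo) + ε • h := by abel
        rw [e1]
        have e2 : ‖(w - xo) + ε • h‖ ^ 2 = r ^ 2 + ε ^ 2 := by
          rw [pyth _ _ (by rw [inner_sub_left, pw, px]; ring), hw1]
        nlinarith [norm_nonneg ((w - xo) + ε • h)]
      · rw [hle, ← hb, ← hyo]
        have e1 : w + ε • h - yo = (w - yo) + ε • h := by abel
        rw [e1]
        have e2 : ‖(w - yo) + ε • h‖ ^ 2 = (d - r) ^ 2 + ε ^ 2 := by
          rw [pyth _ _ (by rw [inner_sub_left, pw, py]; ring), hw2]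
        nlinarith [norm_nonneg ((w - yo) + ε • h)]
  · intro P hP hPpos
    obtain ⟨C, hC⟩ : ∃ C : ℝ, ∀ p ∈ P, ‖p‖ ≤ C := by
      rcases (hP.image norm).bddAbove with ⟨C, hC⟩
      exact ⟨C, fun p hp => hC (Set.mem_image_of_mem _ hp)⟩
    refine ⟨(max C 0 + 1) • h, ?_, ?_⟩
    · rw [real_inner_smul_left, hhh]
      have := le_max_right C 0; linarith
    · intro p hp
      rw [hle]
      have h1 : (inner ℝ ((max C 0 + 1) • h) h : ℝ) = max C 0 + 1 := by
        rw [real_inner_smul_left, hhh]; ring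
      rw [h1, sub_self, sub_zero]
      have := hC p hp
      have := le_max_left C 0
      linarith
end
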